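/- Let A : ℝⁿ → Matrix (Fin d) (Fin d) ℝ be such that every A(x) is symmetric positive semidefinite, A is uniformly elliptic (there exists c > 0 with ⟨A(x)z, z⟩ ≥ c|z|² for all x ∈ ℝⁿ and z ∈ ℝ^d), and A is Lipschitz: ‖A(x) − A(y)‖ ≤ L|x − y| for all x, y (operator norm). Then the map x ↦ A(x)^{1/2}, where A(x)^{1/2} is the unique symmetric positive semidefinite square root of A(x), is Lipschitz: there exists L' > 0 such that ‖A(x)^{1/2} − A(y)^{1/2}‖ ≤ L'|x − y| for all x, y ∈ ℝⁿ. -/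

import Mathlib

open scoped Matrix.Norms.L2Operator

open scoped ComplexOrder in
/-- The positive semidefinite square root of a positive semidefinite matrix
(the definition that Mathlib carried under this name in December 2024). -/
noncomputable def Matrix.PosSemidef.sqrt {n 𝕜 : Type*} [Fintype n] [DecidableEq n] [RCLike 𝕜]
    {A : Matrix n n 𝕜} (hA : A.PosSemidef) : Matrix n n 𝕜 :=
  hA.1.eigenvectorUnitary.1 * Matrix.diagonal ((↑) ∘ (Real.sqrt ∘ hA.1.eigenvalues))
    * (star hA.1.eigenvectorUnitary : Matrix n n 𝕜)

open scoped ComplexOrder in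
theorem Matrix.PosSemidef.posSemidef_sqrt {n 𝕜 : Type*} [Fintype n] [DecidableEq n] [RCLike 𝕜]
    {A : Matrix n n 𝕜} (hA : A.PosSemidef) : hA.sqrt.PosSemidef := by
  apply Matrix.PosSemidef.mul_mul_conjTranspose_same
  refine Matrix.posSemidef_diagonal_iff.mpr fun i ↦ ?_
  rw [Function.comp_apply, RCLike.nonneg_iff]
  constructor
  · simp only [Function.comp_apply, RCLike.ofReal_re]
    exact Real.sqrt_nonneg _
  · simp

open scoped ComplexOrder in
theorem Matrix.PosSemidef.sq_sqrt {n 𝕜 : Type*} [Fintype n] [DecidableEq n] [RCLike 𝕜]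
    {A : Matrix n n 𝕜} (hA : A.PosSemidef) : hA.sqrt ^ 2 = A := by
  let C : Matrix n n 𝕜 := hA.1.eigenvectorUnitary
  let E := Matrix.diagonal ((↑) ∘ Real.sqrt ∘ hA.1.eigenvalues : n → 𝕜)
  suffices C * (E * (star C * C) * E) * star C = A by
    rw [Matrix.PosSemidef.sqrt, pow_two]
    simpa only [← mul_assoc] using this
  have : star C * C = 1 := by simp [C]
  rw [this, mul_one]
  have : E * E = Matrix.diagonal ((↑) ∘ hA.1.eigenvalues) := by
    rw [Matrix.diagonal_mul_diagonal]
    congr! with v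
    simp [← pow_two, ← RCLike.ofReal_pow, Real.sq_sqrt (hA.eigenvalues_nonneg v)]
  rw [this]
  conv_rhs => rw [hA.1.spectral_theorem, Unitary.conjStarAlgAut_apply]

section SqrtLipschitzAux

open scoped RealInnerProductSpace Matrix

variable {d : ℕ}

private lemma aux_symm {S : Matrix (Fin d) (Fin d) ℝ} (hS : S.IsHermitian)
    (u v : EuclideanSpace ℝ (Fin d)) :
    ⟪Matrix.toEuclideanCLM (𝕜 := ℝ) S u, v⟫ = ⟪u, Matrix.toEuclideanCLM (𝕜 := ℝ) S v⟫ := by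
  have h := (Matrix.isHermitian_iff_isSymmetric.mp hS) u v
  simpa [← Matrix.coe_toEuclideanCLM_eq_toEuclideanLin] using h

private lemma aux_inner_repr (B : OrthonormalBasis (Fin d) ℝ (EuclideanSpace ℝ (Fin d)))
    (u v : EuclideanSpace ℝ (Fin d)) :
    ⟪u, v⟫ = ∑ j, B.repr u j * B.repr v j := by
  rw [← B.repr.inner_map_map u v]
  simp only [PiLp.inner_apply, RCLike.inner_apply, starRingEnd_apply, star_trivial]
  exact Finset.sum_congr rfl fun _ _ => mul_comm _ _

private lemma aux_repr_eigen {T : EuclideanSpace ℝ (Fin d) →L[ℝ] EuclideanSpace ℝ (Fin d)}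
    (hT : ∀ u v, ⟪T u, v⟫ = ⟪u, T v⟫)
    (B : OrthonormalBasis (Fin d) ℝ (EuclideanSpace ℝ (Fin d))) (μ : Fin d → ℝ)
    (hB : ∀ j, T (B j) = μ j • B j) (v : EuclideanSpace ℝ (Fin d)) (j : Fin d) :
    B.repr (T v) j = μ j * B.repr v j := by
  rw [B.repr_apply_apply, B.repr_apply_apply, ← hT, hB, real_inner_smul_left]

private lemma aux_quadform {T : EuclideanSpace ℝ (Fin d) →L[ℝ] EuclideanSpace ℝ (Fin d)}
    (hT : ∀ u v, ⟪T u, v⟫ = ⟪u, T v⟫)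
    (B : OrthonormalBasis (Fin d) ℝ (EuclideanSpace ℝ (Fin d))) (μ : Fin d → ℝ)
    (hB : ∀ j, T (B j) = μ j • B j) (v : EuclideanSpace ℝ (Fin d)) :
    ⟪T v, v⟫ = ∑ j, μ j * (B.repr v j) ^ 2 := by
  rw [aux_inner_repr B (T v) v]
  refine Finset.sum_congr rfl fun j _ => ?_
  rw [aux_repr_eigen hT B μ hB v j]
  ring

private lemma aux_norm_sq_repr (B : OrthonormalBasis (Fin d) ℝ (EuclideanSpace ℝ (Fin d)))
    (v : EuclideanSpace ℝ (Fin d)) : ‖v‖ ^ 2 = ∑ j, (B.repr v j) ^ 2 := by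
  rw [← real_inner_self_eq_norm_sq, aux_inner_repr B v v]
  exact Finset.sum_congr rfl fun j _ => (sq _).symm

private lemma aux_opNorm_le {T : EuclideanSpace ℝ (Fin d) →L[ℝ] EuclideanSpace ℝ (Fin d)}
    (hT : ∀ u v, ⟪T u, v⟫ = ⟪u, T v⟫)
    (B : OrthonormalBasis (Fin d) ℝ (EuclideanSpace ℝ (Fin d))) (μ : Fin d → ℝ)
    (hB : ∀ j, T (B j) = μ j • B j) (m : ℝ) (hm : 0 ≤ m) (hμ : ∀ j, |μ j| ≤ m) :
    ‖T‖ ≤ m := by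
  refine T.opNorm_le_bound hm fun v => ?_
  have hTv : ‖T v‖ ^ 2 = ∑ j, (μ j) ^ 2 * (B.repr v j) ^ 2 := by
    rw [← real_inner_self_eq_norm_sq, aux_inner_repr B (T v) (T v)]
    refine Finset.sum_congr rfl fun j _ => ?_
    rw [aux_repr_eigen hT B μ hB v j]
    ring
  have hsq : ‖T v‖ ^ 2 ≤ (m * ‖v‖) ^ 2 := by
    rw [hTv, mul_pow, aux_norm_sq_repr B v, Finset.mul_sum]
    refine Finset.sum_le_sum fun j _ => ?_
    have h : μ j ^ 2 ≤ m ^ 2 := by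
      rw [← sq_abs (μ j)]
      exact pow_le_pow_left₀ (abs_nonneg _) (hμ j) 2
    exact mul_le_mul_of_nonneg_right h (sq_nonneg _)
  have h1 : (0:ℝ) ≤ m * ‖v‖ := mul_nonneg hm (norm_nonneg _)
  nlinarith [norm_nonneg (T v)]

private lemma aux_clm_eigen {S : Matrix (Fin d) (Fin d) ℝ} (hS : S.IsHermitian) (j : Fin d) :
    Matrix.toEuclideanCLM (𝕜 := ℝ) S (hS.eigenvectorBasis j)
      = hS.eigenvalues j • hS.eigenvectorBasis j := by
  have h := hS.mulVec_eigenvectorBasis j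
  apply (WithLp.equiv 2 _).injective
  simp only [WithLp.equiv_apply, Matrix.ofLp_toEuclideanCLM, Matrix.toLin'_apply]
  ext i
  simpa using congrFun h i

private lemma aux_sqrt_eigen {S : Matrix (Fin d) (Fin d) ℝ} (hS : S.PosSemidef) (j : Fin d) :
    Matrix.toEuclideanCLM (𝕜 := ℝ) hS.sqrt (hS.1.eigenvectorBasis j)
      = Real.sqrt (hS.1.eigenvalues j) • hS.1.eigenvectorBasis j := by
  have h : hS.sqrt *ᵥ ⇑(hS.1.eigenvectorBasis j)
      = Real.sqrt (hS.1.eigenvalues j) • ⇑(hS.1.eigenvectorBasis j) := by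
    rw [Matrix.PosSemidef.sqrt, ← Matrix.mulVec_mulVec, ← Matrix.mulVec_mulVec,
      Matrix.IsHermitian.star_eigenvectorUnitary_mulVec,
      Matrix.diagonal_mulVec_single]
    have h2 : ((RCLike.ofReal ∘ Real.sqrt ∘ hS.1.eigenvalues) j * 1 : ℝ)
        = Real.sqrt (hS.1.eigenvalues j) := by simp
    rw [h2]
    have h3 : (Pi.single j (Real.sqrt (hS.1.eigenvalues j)) : Fin d → ℝ)
        = Real.sqrt (hS.1.eigenvalues j) • (Pi.single j 1 : Fin d → ℝ) := by
      ext i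
      rcases eq_or_ne i j with rfl | h
      · simp
      · simp [Pi.single_eq_of_ne h]
    rw [h3, Matrix.mulVec_smul, Matrix.IsHermitian.eigenvectorUnitary_mulVec]
  apply (WithLp.equiv 2 _).injective
  simp only [WithLp.equiv_apply, Matrix.ofLp_toEuclideanCLM, Matrix.toLin'_apply]
  ext i
  simpa using congrFun h i

/-- Lower bound on the quadratic form of the square root under ellipticity. -/
private lemma aux_sqrt_lower {S : Matrix (Fin d) (Fin d) ℝ} (hS : S.PosSemidef)
    (c : ℝ) (hc : 0 < c)
    (hell : ∀ z : Fin d → ℝ, c * ∑ i, z i ^ 2 ≤ ∑ i, S.mulVec z i * z i)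
    (v : EuclideanSpace ℝ (Fin d)) :
    Real.sqrt c * ‖v‖ ^ 2 ≤ ⟪Matrix.toEuclideanCLM (𝕜 := ℝ) hS.sqrt v, v⟫ := by
  set B := hS.1.eigenvectorBasis with hB
  -- each eigenvalue is at least c
  have heig : ∀ j, c ≤ hS.1.eigenvalues j := by
    intro j
    have hv1 : ‖B j‖ = 1 := B.orthonormal.1 j
    have hsum : ∑ i, (B j i) ^ 2 = 1 := by
      have := aux_norm_sq_repr (EuclideanSpace.basisFun (Fin d) ℝ) (B j)
      simp only [EuclideanSpace.basisFun_repr] at this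
      rw [← this, hv1, one_pow]
    have h := hell ⇑(B j)
    simp only [WithLp.equiv_apply] at h
    rw [hsum, mul_one] at h
    have hmv := hS.1.mulVec_eigenvectorBasis j
    calc c ≤ ∑ i, (S *ᵥ ⇑(B j)) i * B j i := h
      _ = ∑ i, hS.1.eigenvalues j * ((B j i) * (B j i)) := by
          refine Finset.sum_congr rfl fun i _ => ?_
          rw [hmv]
          simp [mul_assoc, hB]
      _ = hS.1.eigenvalues j := by
          rw [← Finset.mul_sum]
          simp only [← sq]
          rw [hsum, mul_one]
  have hsa := aux_symm hS.posSemidef_sqrt.1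
  have hq := aux_quadform hsa B (fun j => Real.sqrt (hS.1.eigenvalues j))
    (fun j => aux_sqrt_eigen hS j) v
  rw [hq, aux_norm_sq_repr B v, Finset.mul_sum]
  refine Finset.sum_le_sum fun j _ => ?_
  exact mul_le_mul_of_nonneg_right (Real.sqrt_le_sqrt (heig j)) (sq_nonneg _)

/-- Key inequality: `2 s ‖P - Q‖ ≤ ‖P² - Q²‖` for matrices bounded below by `s`. -/
private lemma aux_key {P Q : Matrix (Fin d) (Fin d) ℝ} (hP : P.PosSemidef) (hQ : Q.PosSemidef)
    (s : ℝ) (hs : 0 < s)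
    (hPl : ∀ v : EuclideanSpace ℝ (Fin d),
      s * ‖v‖ ^ 2 ≤ ⟪Matrix.toEuclideanCLM (𝕜 := ℝ) P v, v⟫)
    (hQl : ∀ v : EuclideanSpace ℝ (Fin d),
      s * ‖v‖ ^ 2 ≤ ⟪Matrix.toEuclideanCLM (𝕜 := ℝ) Q v, v⟫) :
    2 * s * ‖P - Q‖ ≤ ‖P ^ 2 - Q ^ 2‖ := by
  have hS : (P - Q).IsHermitian := hP.1.sub hQ.1
  set N := ‖P ^ 2 - Q ^ 2‖ with hN
  have hN0 : 0 ≤ N := norm_nonneg _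
  have hm : 0 ≤ N / (2 * s) := by positivity
  have hnorm : ‖P - Q‖ = ‖Matrix.toEuclideanCLM (𝕜 := ℝ) (P - Q)‖ := Matrix.cstar_norm_def _
  have hle : ‖Matrix.toEuclideanCLM (𝕜 := ℝ) (P - Q)‖ ≤ N / (2 * s) := by
    refine aux_opNorm_le (aux_symm hS) hS.eigenvectorBasis hS.eigenvalues
      (fun j => aux_clm_eigen hS j) _ hm fun j => ?_
    set v := hS.eigenvectorBasis j with hv
    have hv1 : ‖v‖ = 1 := hS.eigenvectorBasis.orthonormal.1 j
    set lam := hS.eigenvalues j with hlam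
    have heig : Matrix.toEuclideanCLM (𝕜 := ℝ) (P - Q) v = lam • v := aux_clm_eigen hS j
    rw [map_sub, ContinuousLinearMap.sub_apply] at heig
    set TP := Matrix.toEuclideanCLM (𝕜 := ℝ) P
    set TQ := Matrix.toEuclideanCLM (𝕜 := ℝ) Q
    -- the quadratic form of P² - Q² at v
    have ht : ⟪Matrix.toEuclideanCLM (𝕜 := ℝ) (P ^ 2 - Q ^ 2) v, v⟫
        = lam * (⟪TP v, v⟫ + ⟪TQ v, v⟫) := by
      have h2 : Matrix.toEuclideanCLM (𝕜 := ℝ) (P ^ 2 - Q ^ 2) v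
          = TP (TP v) - TQ (TQ v) := by
        rw [map_sub, ContinuousLinearMap.sub_apply, sq, sq, map_mul, map_mul]
        rfl
      rw [h2, inner_sub_left]
      have hPP : ⟪TP (TP v), v⟫ = ⟪TP v, TP v⟫ := by
        rw [aux_symm hP.1 (TP v) v, real_inner_comm]
      have hQQ : ⟪TQ (TQ v), v⟫ = ⟪TQ v, TQ v⟫ := by
        rw [aux_symm hQ.1 (TQ v) v, real_inner_comm]
      rw [hPP, hQQ]
      have hfact : ⟪TP v, TP v⟫ - ⟪TQ v, TQ v⟫ = ⟪TP v - TQ v, TP v + TQ v⟫ := by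
        rw [inner_sub_left, inner_add_right, inner_add_right, real_inner_comm (TQ v) (TP v)]
        ring
      rw [hfact, heig, real_inner_smul_left, inner_add_right,
        real_inner_comm v (TP v), real_inner_comm v (TQ v)]
    have hr : 2 * s ≤ ⟪TP v, v⟫ + ⟪TQ v, v⟫ := by
      have h1 := hPl v
      have h2 := hQl v
      rw [hv1] at h1 h2
      nlinarith
    set TD := Matrix.toEuclideanCLM (𝕜 := ℝ) (P ^ 2 - Q ^ 2) with hTD
    have habs : |⟪TD v, v⟫| ≤ N := by
      calc |⟪TD v, v⟫|
          ≤ ‖TD v‖ * ‖v‖ := abs_real_inner_le_norm _ _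
        _ ≤ ‖TD‖ * ‖v‖ * ‖v‖ :=
            mul_le_mul_of_nonneg_right (ContinuousLinearMap.le_opNorm _ _) (norm_nonneg _)
        _ = N := by rw [hv1, hTD, ← Matrix.cstar_norm_def]; ring
    rw [ht, abs_mul] at habs
    have hrabs : |⟪TP v, v⟫ + ⟪TQ v, v⟫| = ⟪TP v, v⟫ + ⟪TQ v, v⟫ :=
      abs_of_nonneg (by nlinarith)
    rw [hrabs] at habs
    rw [le_div_iff₀ (by positivity)]
    calc |lam| * (2 * s) ≤ |lam| * (⟪TP v, v⟫ + ⟪TQ v, v⟫) :=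
          mul_le_mul_of_nonneg_left hr (abs_nonneg _)
      _ ≤ N := habs
  rw [hnorm]
  calc 2 * s * ‖Matrix.toEuclideanCLM (𝕜 := ℝ) (P - Q)‖
      ≤ 2 * s * (N / (2 * s)) := mul_le_mul_of_nonneg_left hle (by positivity)
    _ = N := by field_simp

end SqrtLipschitzAux

/-- Lipschitz continuity of the positive semidefinite square root: if `A(x)` is a family of
symmetric positive semidefinite matrices which is uniformly elliptic and Lipschitz in the
operator norm, then `x ↦ A(x)^{1/2}` is Lipschitz in the operator norm. -/
theorem posSemidef_sqrt_lipschitz {n d : ℕ}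
    (A : EuclideanSpace ℝ (Fin n) → Matrix (Fin d) (Fin d) ℝ)
    (hsymm : ∀ x, (A x).IsSymm)
    (hpsd : ∀ x, (A x).PosSemidef)
    (c : ℝ) (hc : 0 < c)
    (hell : ∀ (x : EuclideanSpace ℝ (Fin n)) (z : Fin d → ℝ),
      c * ∑ i, z i ^ 2 ≤ ∑ i, (A x).mulVec z i * z i)
    (L : ℝ) (hLip : ∀ x y, ‖A x - A y‖ ≤ L * ‖x - y‖) :
    ∃ L' > 0, ∀ x y, ‖(hpsd x).sqrt - (hpsd y).sqrt‖ ≤ L' * ‖x - y‖ := by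
  set s := Real.sqrt c with hs
  have hs0 : 0 < s := Real.sqrt_pos.mpr hc
  refine ⟨(|L| + 1) / (2 * s), by positivity, fun x y => ?_⟩
  have key := aux_key (hpsd x).posSemidef_sqrt (hpsd y).posSemidef_sqrt s hs0
    (aux_sqrt_lower (hpsd x) c hc (hell x)) (aux_sqrt_lower (hpsd y) c hc (hell y))
  rw [(hpsd x).sq_sqrt, (hpsd y).sq_sqrt] at key
  have h1 : ‖A x - A y‖ ≤ (|L| + 1) * ‖x - y‖ := by
    calc ‖A x - A y‖ ≤ L * ‖x - y‖ := hLip x y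
      _ ≤ (|L| + 1) * ‖x - y‖ :=
          mul_le_mul_of_nonneg_right (by linarith [le_abs_self L]) (norm_nonneg _)
  rw [div_mul_eq_mul_div, le_div_iff₀ (by positivity)]
  calc ‖(hpsd x).sqrt - (hpsd y).sqrt‖ * (2 * s) = 2 * s * ‖(hpsd x).sqrt - (hpsd y).sqrt‖ := by
        ring
    _ ≤ ‖A x - A y‖ := key
    _ ≤ (|L| + 1) * ‖x - y‖ := h1
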